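/- Let G be a graph with a perfect matching, and let S and S' be two disjoint subsets of V(G) such that every neighbor of a vertex in S lies in S', and |S'| ≤ |S| + 1. If S is an independent set of G, then S' is a barrier of G, i.e., the number of odd components of G − S' equals |S'|. -/

import Mathlib

open SimpleGraph Set

universe u
variable {V : Type u}

/-- Number of odd components of a graph. -/
noncomputable def oddComps (G : SimpleGraph V) : ℕ :=
  Nat.card {c : G.ConnectedComponent // Odd (Nat.card c.supp)}

/-- `S` is a barrier of `G`: the number of odd components of `G − S` equals `|S|`. -/
def IsBarrier (G : SimpleGraph V) (S : Set V) : Prop :=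
  oddComps (G.induce Sᶜ) = S.ncard

/-- `G` has a perfect matching. -/
def HasPM (G : SimpleGraph V) : Prop :=
  ∃ M : Subgraph G, M.IsPerfectMatching

/-- `G` is matching covered. -/
def MatchingCovered (G : SimpleGraph V) : Prop :=
  G.Connected ∧ G.edgeSet.Nonempty ∧
    ∀ e ∈ G.edgeSet, ∃ M : Subgraph G, M.IsPerfectMatching ∧ e ∈ M.edgeSet

/-- An edge `e` of a matching covered graph `G` is removable. -/
def Removable (G : SimpleGraph V) (e : Sym2 V) : Prop :=
  e ∈ G.edgeSet ∧ MatchingCovered (G.deleteEdges {e})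

/-- `G` is 3-connected. -/
def ThreeConnected (G : SimpleGraph V) : Prop :=
  4 ≤ Nat.card V ∧ ∀ S : Set V, S.ncard ≤ 2 → (G.induce Sᶜ).Connected

/-- A brick. -/
def IsBrick (G : SimpleGraph V) : Prop :=
  ThreeConnected G ∧ ∀ x y : V, x ≠ y → HasPM (G.induce ({x, y} : Set V)ᶜ)

/-- neighbours outside `S` of vertices of `S`. -/
def Nbrs (G : SimpleGraph V) (S : Set V) : Set V :=
  {v | v ∉ S ∧ ∃ u ∈ S, G.Adj u v}

/-- factor-critical graph. -/
def FactorCritical (G : SimpleGraph V) : Prop :=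
  ∀ v : V, HasPM (G.induce ({v} : Set V)ᶜ)

/-- `(U, W)` is a bipartition of `G`. -/
def IsBipartition (G : SimpleGraph V) (U W : Set V) : Prop :=
  Disjoint U W ∧ U ∪ W = Set.univ ∧
    ∀ a b : V, G.Adj a b → (a ∈ U ∧ b ∈ W) ∨ (a ∈ W ∧ b ∈ U)


noncomputable def deleteVertsIso (G : SimpleGraph V) (u : Set V) :
    ((⊤ : G.Subgraph).deleteVerts u).coe ≃g G.induce uᶜ where
  toEquiv := Equiv.setCongr (by simp [Set.compl_eq_univ_diff])
  map_rel_iff' := by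
    rintro ⟨a, ha⟩ ⟨b, hb⟩
    simp only [Equiv.setCongr_apply, comap_adj, Function.Embedding.coe_subtype,
      Subgraph.coe_adj, Subgraph.deleteVerts_adj, Subgraph.verts_top, Subgraph.top_adj]
    simp at ha hb
    tauto

lemma supp_card_iso {W : Type u} {G : SimpleGraph V} {G' : SimpleGraph W} (φ : G ≃g G')
    (c : G.ConnectedComponent) :
    Nat.card (φ.connectedComponentEquiv c).supp = Nat.card c.supp := by
  apply Nat.card_congr
  exact (Equiv.subtypeEquiv φ.toEquiv (fun v => by
    rw [ConnectedComponent.mem_supp_iff, ConnectedComponent.mem_supp_iff,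
      Iso.connectedComponentEquiv_apply]
    exact (ConnectedComponent.iso_image_comp_eq_map_iff_eq_comp (φ := φ)).symm)).symm

lemma oddComps_iso {W : Type u} {G : SimpleGraph V} {G' : SimpleGraph W} (φ : G ≃g G') :
    oddComps G = oddComps G' := by
  apply Nat.card_congr
  exact Equiv.subtypeEquiv φ.connectedComponentEquiv (fun c => by rw [supp_card_iso])

/-- If `G` has a perfect matching, `S` and `S'` are disjoint,
every neighbour of a vertex of `S` lies in `S'`, `|S'| ≤ |S| + 1`, and `S` is
independent, then `S'` is a barrier of `G`. -/
theorem stmt0 [Fintype V] (G : SimpleGraph V) (S S' : Set V)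
    (hpm : HasPM G) (hdisj : Disjoint S S')
    (hN : Nbrs G S ⊆ S') (hcard : S'.ncard ≤ S.ncard + 1)
    (hind : ∀ u ∈ S, ∀ v ∈ S, ¬ G.Adj u v) :
    IsBarrier G S' := by
  classical
  obtain ⟨M, hM⟩ := hpm
  -- upper bound: oddComps ≤ |S'|
  have hupper : oddComps (G.induce S'ᶜ) ≤ S'.ncard := by
    rw [← oddComps_iso (deleteVertsIso G S')]
    have hf : ∀ c : {c : ConnectedComponent ((⊤ : G.Subgraph).deleteVerts S').coe //
        Odd (Nat.card c.supp)},
        ∃ w, w ∈ S' ∧ ∃ v : ((⊤ : G.Subgraph).deleteVerts S').verts,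
          M.Adj v w ∧ v ∈ c.1.supp := fun c =>
      SimpleGraph.ConnectedComponent.odd_matches_node_outside hM
        ⟨c.1, by have := c.2; rw [Nat.card_coe_set_eq] at this; exact this⟩
    choose w hw v hv1 hv2 using hf
    have hinj : Function.Injective (fun c => (⟨w c, hw c⟩ : ↥S')) := by
      intro c1 c2 hc
      simp only [Subtype.mk.injEq] at hc
      have h1 : M.Adj (w c1) ↑(v c1) := (hv1 c1).symm
      have h2 : M.Adj (w c1) ↑(v c2) := hc ▸ (hv1 c2).symm
      obtain ⟨x, _, hx⟩ := hM.1 (hM.2 (w c1))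
      have : (v c1 : V) = v c2 := (hx _ h1).trans (hx _ h2).symm
      have hv : v c1 = v c2 := Subtype.val_injective this
      have := hv2 c1
      rw [hv] at this
      exact Subtype.ext ((this.symm.trans (hv2 c2)) : _)
    calc oddComps ((⊤ : G.Subgraph).deleteVerts S').coe
        = Nat.card {c : ConnectedComponent ((⊤ : G.Subgraph).deleteVerts S').coe //
            Odd (Nat.card c.supp)} := rfl
      _ ≤ Nat.card ↥S' := Nat.card_le_card_of_injective _ hinj
      _ = S'.ncard := Nat.card_coe_set_eq S'
  -- vertices of S are isolated in the induced graph
  have hSc : ∀ s ∈ S, s ∈ S'ᶜ := fun s hs => (disjoint_left.mp hdisj hs)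
  have hiso : ∀ (a b : ↥(S'ᶜ)), (a : V) ∈ S → ¬ (G.induce S'ᶜ).Adj a b := by
    rintro ⟨a, ha⟩ ⟨b, hb⟩ haS hadj
    have hGadj : G.Adj a b := hadj
    by_cases hbS : b ∈ S
    · exact hind a haS b hbS hGadj
    · exact hb (hN ⟨hbS, a, haS, hGadj⟩)
  have hsupp : ∀ (a : ↥(S'ᶜ)), (a : V) ∈ S →
      ((G.induce S'ᶜ).connectedComponentMk a).supp = {a} := by
    intro a haS
    ext v
    simp only [ConnectedComponent.mem_supp_iff, ConnectedComponent.eq, Set.mem_singleton_iff]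
    constructor
    · intro hr
      obtain ⟨p⟩ := hr.symm
      cases p with
      | nil => rfl
      | cons h q => exact absurd h (hiso _ _ haS)
    · rintro rfl
      exact Reachable.refl _
  -- lower bound: |S| ≤ oddComps
  have hlower : S.ncard ≤ oddComps (G.induce S'ᶜ) := by
    have hg : Function.Injective (fun a : ↥S =>
        (⟨(G.induce S'ᶜ).connectedComponentMk ⟨a, hSc a a.2⟩, by
          rw [hsupp _ a.2]
          simp⟩ : {c : (G.induce S'ᶜ).ConnectedComponent // Odd (Nat.card c.supp)})) := by
      intro a b hab
      simp only [Subtype.mk.injEq] at hab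
      have : (⟨(b : V), hSc b b.2⟩ : ↥(S'ᶜ)) ∈
          ((G.induce S'ᶜ).connectedComponentMk ⟨a, hSc a a.2⟩).supp := by
        rw [hab]; exact rfl
      rw [hsupp _ a.2] at this
      simp only [Set.mem_singleton_iff, Subtype.mk.injEq] at this
      exact Subtype.ext this.symm
    calc S.ncard = Nat.card ↥S := (Nat.card_coe_set_eq S).symm
      _ ≤ _ := Nat.card_le_card_of_injective _ hg
  -- parity
  have hparity : Odd (Nat.card ↥(S'ᶜ)) ↔ Odd (oddComps (G.induce S'ᶜ)) := by
    have h1 := (SimpleGraph.odd_ncard_oddComponents (G.induce S'ᶜ)).symm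
    simp only [SimpleGraph.oddComponents, ← Nat.card_coe_set_eq] at h1
    have h2 : oddComps (G.induce S'ᶜ) =
        Nat.card ↥{c : (G.induce S'ᶜ).ConnectedComponent | Odd (Nat.card c.supp)} := rfl
    rw [h2]
    exact h1
  have heven : Even (Nat.card V) := by
    rw [Nat.card_eq_fintype_card]; exact hM.even_card
  have hsum : S'.ncard + (S'ᶜ).ncard = Nat.card V := by
    have := Set.ncard_add_ncard_compl S'
    simpa using this
  have hcompl : (S'ᶜ).ncard = Nat.card ↥(S'ᶜ) := S'ᶜ.ncard_eq_toFinset_card' ▸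
    (Nat.card_coe_set_eq (S'ᶜ)).symm
  rw [Nat.odd_iff, Nat.odd_iff] at hparity
  rw [Nat.even_iff] at heven
  unfold IsBarrier
  omega
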